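/- A 3×3 Hermitian matrix A is positive definite if and only if a₁₁ > 0, P₁₂ + P₁₃ > 0, and det A > 0, where P₁₂ and P₁₃ are the 2×2 principal minors on rows/columns {1,2} and {1,3} respectively. -/

import Mathlib

open scoped ComplexOrder

set_option maxHeartbeats 1000000 in
private lemma quad_pos (a b f p1 p2 q1 q2 r1 r2 u1 u2 v1 v2 w1 w2 : ℝ)
    (ha : 0 < a)
    (hs : 0 < (a*b - (p1*p1+p2*p2)) + (a*f - (q1*q1+q2*q2)))
    (hD : 0 < a*b*f - a*(r1^2+r2^2) - b*(q1^2+q2^2) - f*(p1^2+p2^2)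
        + 2*((p1*r1-p2*r2)*q1 + (p1*r2+p2*r1)*q2))
    (hx : 0 < u1^2+u2^2+v1^2+v2^2+w1^2+w2^2) :
    0 < a*(u1^2+u2^2)+b*(v1^2+v2^2)+f*(w1^2+w2^2)
      + 2*(p1*(u1*v1+u2*v2) - p2*(u1*v2-u2*v1))
      + 2*(q1*(u1*w1+u2*w2) - q2*(u1*w2-u2*w1))
      + 2*(r1*(v1*w1+v2*w2) - r2*(v1*w2-v2*w1)) := by
  have id3 : (a*b-(p1^2+p2^2))*(a*f-(q1^2+q2^2))
      = a*(a*b*f - a*(r1^2+r2^2) - b*(q1^2+q2^2) - f*(p1^2+p2^2)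
        + 2*((p1*r1-p2*r2)*q1 + (p1*r2+p2*r1)*q2))
        + (a*r1-(p1*q1+p2*q2))^2 + (a*r2-(p1*q2-p2*q1))^2 := by ring
  have hprod : 0 < (a*b-(p1^2+p2^2))*(a*f-(q1^2+q2^2)) := by
    rw [id3]
    have h1 := mul_pos ha hD
    have h2 := sq_nonneg (a*r1-(p1*q1+p2*q2))
    have h3 := sq_nonneg (a*r2-(p1*q2-p2*q1))
    linarith
  have hP12 : 0 < a*b - (p1^2+p2^2) := by
    by_contra hc
    push_neg at hc
    have h13 : 0 ≤ a*f - (q1^2+q2^2) := by nlinarith [hs]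
    have h2 : (a*b-(p1^2+p2^2))*(a*f-(q1^2+q2^2)) ≤ 0 :=
      mul_nonpos_iff.mpr (Or.inr ⟨hc, h13⟩)
    linarith
  have key : 0 < a * (a*(u1^2+u2^2)+b*(v1^2+v2^2)+f*(w1^2+w2^2)
      + 2*(p1*(u1*v1+u2*v2) - p2*(u1*v2-u2*v1))
      + 2*(q1*(u1*w1+u2*w2) - q2*(u1*w2-u2*w1))
      + 2*(r1*(v1*w1+v2*w2) - r2*(v1*w2-v2*w1))) := by
    rcases eq_or_lt_of_le (by positivity : (0:ℝ) ≤ w1^2+w2^2) with hw | hw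
    · have hw1 : w1 = 0 := by
        have h1 : w1^2 = 0 := le_antisymm (by nlinarith [sq_nonneg w2]) (sq_nonneg w1)
        exact pow_eq_zero_iff two_ne_zero |>.mp h1
      have hw2 : w2 = 0 := by
        have h1 : w2^2 = 0 := le_antisymm (by nlinarith [sq_nonneg w1]) (sq_nonneg w2)
        exact pow_eq_zero_iff two_ne_zero |>.mp h1
      subst hw1; subst hw2
      rcases eq_or_lt_of_le (by positivity : (0:ℝ) ≤ v1^2+v2^2) with hv | hv
      · have hv1 : v1 = 0 := by
          have h1 : v1^2 = 0 := le_antisymm (by nlinarith [sq_nonneg v2]) (sq_nonneg v1)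
          exact pow_eq_zero_iff two_ne_zero |>.mp h1
        have hv2 : v2 = 0 := by
          have h1 : v2^2 = 0 := le_antisymm (by nlinarith [sq_nonneg v1]) (sq_nonneg v2)
          exact pow_eq_zero_iff two_ne_zero |>.mp h1
        subst hv1; subst hv2
        have hu : 0 < u1^2+u2^2 := by nlinarith [hx]
        have idu : a * (a*(u1^2+u2^2)+b*(0^2+0^2)+f*(0^2+0^2)
            + 2*(p1*(u1*0+u2*0) - p2*(u1*0-u2*0))
            + 2*(q1*(u1*0+u2*0) - q2*(u1*0-u2*0))
            + 2*(r1*(0*0+0*0) - r2*(0*0-0*0))) = a^2*(u1^2+u2^2) := by ring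
        rw [idu]
        exact mul_pos (pow_pos ha 2) hu
      · have idv : a * (a*(u1^2+u2^2)+b*(v1^2+v2^2)+f*(0^2+0^2)
            + 2*(p1*(u1*v1+u2*v2) - p2*(u1*v2-u2*v1))
            + 2*(q1*(u1*0+u2*0) - q2*(u1*0-u2*0))
            + 2*(r1*(v1*0+v2*0) - r2*(v1*0-v2*0)))
            = (a*u1+p1*v1-p2*v2)^2 + (a*u2+p1*v2+p2*v1)^2
              + (a*b-(p1^2+p2^2))*(v1^2+v2^2) := by ring
        rw [idv]
        have h1 := sq_nonneg (a*u1+p1*v1-p2*v2)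
        have h2 := sq_nonneg (a*u2+p1*v2+p2*v1)
        have h3 := mul_pos hP12 hv
        linarith
    · have id2 : (a*b-(p1^2+p2^2)) * ((a*b-(p1^2+p2^2))*(v1^2+v2^2) + (a*f-(q1^2+q2^2))*(w1^2+w2^2)
          + 2*((a*r1-(p1*q1+p2*q2))*(v1*w1+v2*w2) - (a*r2-(p1*q2-p2*q1))*(v1*w2-v2*w1)))
          = ((a*b-(p1^2+p2^2))*v1 + (a*r1-(p1*q1+p2*q2))*w1 - (a*r2-(p1*q2-p2*q1))*w2)^2
          + ((a*b-(p1^2+p2^2))*v2 + (a*r1-(p1*q1+p2*q2))*w2 + (a*r2-(p1*q2-p2*q1))*w1)^2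
          + (a*(a*b*f - a*(r1^2+r2^2) - b*(q1^2+q2^2) - f*(p1^2+p2^2)
            + 2*((p1*r1-p2*r2)*q1 + (p1*r2+p2*r1)*q2)))*(w1^2+w2^2) := by ring
      have hρ : 0 < (a*b-(p1^2+p2^2))*(v1^2+v2^2) + (a*f-(q1^2+q2^2))*(w1^2+w2^2)
          + 2*((a*r1-(p1*q1+p2*q2))*(v1*w1+v2*w2) - (a*r2-(p1*q2-p2*q1))*(v1*w2-v2*w1)) := by
        by_contra hc
        push_neg at hc
        have h2 : (a*b-(p1^2+p2^2)) * ((a*b-(p1^2+p2^2))*(v1^2+v2^2) + (a*f-(q1^2+q2^2))*(w1^2+w2^2)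
            + 2*((a*r1-(p1*q1+p2*q2))*(v1*w1+v2*w2) - (a*r2-(p1*q2-p2*q1))*(v1*w2-v2*w1))) ≤ 0 :=
          mul_nonpos_iff.mpr (Or.inl ⟨hP12.le, hc⟩)
        rw [id2] at h2
        have h3 := sq_nonneg ((a*b-(p1^2+p2^2))*v1 + (a*r1-(p1*q1+p2*q2))*w1 - (a*r2-(p1*q2-p2*q1))*w2)
        have h4 := sq_nonneg ((a*b-(p1^2+p2^2))*v2 + (a*r1-(p1*q1+p2*q2))*w2 + (a*r2-(p1*q2-p2*q1))*w1)
        have h5 := mul_pos (mul_pos ha hD) hw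
        linarith
      have id1 : a * (a*(u1^2+u2^2)+b*(v1^2+v2^2)+f*(w1^2+w2^2)
          + 2*(p1*(u1*v1+u2*v2) - p2*(u1*v2-u2*v1))
          + 2*(q1*(u1*w1+u2*w2) - q2*(u1*w2-u2*w1))
          + 2*(r1*(v1*w1+v2*w2) - r2*(v1*w2-v2*w1)))
          = (a*u1+p1*v1-p2*v2+q1*w1-q2*w2)^2 + (a*u2+p1*v2+p2*v1+q1*w2+q2*w1)^2
          + ((a*b-(p1^2+p2^2))*(v1^2+v2^2) + (a*f-(q1^2+q2^2))*(w1^2+w2^2)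
          + 2*((a*r1-(p1*q1+p2*q2))*(v1*w1+v2*w2) - (a*r2-(p1*q2-p2*q1))*(v1*w2-v2*w1))) := by ring
      rw [id1]
      have h1 := sq_nonneg (a*u1+p1*v1-p2*v2+q1*w1-q2*w2)
      have h2 := sq_nonneg (a*u2+p1*v2+p2*v1+q1*w2+q2*w1)
      linarith
  by_contra hc
  push_neg at hc
  have h2 : a * (a*(u1^2+u2^2)+b*(v1^2+v2^2)+f*(w1^2+w2^2)
      + 2*(p1*(u1*v1+u2*v2) - p2*(u1*v2-u2*v1))
      + 2*(q1*(u1*w1+u2*w2) - q2*(u1*w2-u2*w1))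
      + 2*(r1*(v1*w1+v2*w2) - r2*(v1*w2-v2*w1))) ≤ 0 :=
    mul_nonpos_iff.mpr (Or.inl ⟨ha.le, hc⟩)
  linarith

set_option maxHeartbeats 1000000 in
theorem posDef_iff_crit_ii (A : Matrix (Fin 3) (Fin 3) ℂ) (hA : A.IsHermitian) :
    A.PosDef ↔
      (0 < (A 0 0).re ∧ 0 < ((A 0 0).re * (A 1 1).re - Complex.normSq (A 0 1)) + ((A 0 0).re * (A 2 2).re - Complex.normSq (A 0 2))) ∧ 0 < A.det.re := by
  have h10 : A 1 0 = star (A 0 1) := (hA.apply 1 0).symm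
  have h20 : A 2 0 = star (A 0 2) := (hA.apply 2 0).symm
  have h21 : A 2 1 = star (A 1 2) := (hA.apply 2 1).symm
  have h00 : A 0 0 = ((A 0 0).re : ℂ) := by
    have h := hA.apply 0 0
    rw [Complex.star_def, Complex.conj_eq_iff_re] at h
    exact h.symm
  have h11 : A 1 1 = ((A 1 1).re : ℂ) := by
    have h := hA.apply 1 1
    rw [Complex.star_def, Complex.conj_eq_iff_re] at h
    exact h.symm
  have h22 : A 2 2 = ((A 2 2).re : ℂ) := by
    have h := hA.apply 2 2
    rw [Complex.star_def, Complex.conj_eq_iff_re] at h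
    exact h.symm
  constructor
  · intro h
    have hdetre : 0 < A.det.re := (Complex.pos_iff.mp h.det_pos).1
    have ha : 0 < (A 0 0).re := by
      have hx : (![1,0,0] : Fin 3 → ℂ) ≠ 0 := by
        intro hc
        have := congrFun hc 0
        simp at this
      have h0 := h.dotProduct_mulVec_pos hx
      have heq : dotProduct (star (![(1:ℂ),0,0])) (A.mulVec ![(1:ℂ),0,0]) = A 0 0 := by
        simp [dotProduct, Matrix.mulVec, Fin.sum_univ_three]
      rw [heq] at h0
      exact (Complex.pos_iff.mp h0).1
    have ha0 : A 0 0 ≠ 0 := by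
      intro hc
      rw [hc] at ha
      simp at ha
    have hP12 : 0 < (A 0 0).re * (A 1 1).re - Complex.normSq (A 0 1) := by
      have hx : (![A 0 1, -(A 0 0), 0] : Fin 3 → ℂ) ≠ 0 := by
        intro hc
        have := congrFun hc 1
        simp at this
        exact ha0 this
      have h0 := h.dotProduct_mulVec_pos hx
      have h0re := (Complex.pos_iff.mp h0).1
      have heq : (dotProduct (star (![A 0 1, -(A 0 0), 0])) (A.mulVec ![A 0 1, -(A 0 0), 0])).re
          = (A 0 0).re * ((A 0 0).re * (A 1 1).re - Complex.normSq (A 0 1)) := by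
        simp only [dotProduct, Matrix.mulVec, Fin.sum_univ_three, Pi.star_apply,
          Matrix.cons_val_zero, Matrix.cons_val_one, Matrix.head_cons,
          Matrix.cons_val_two, Matrix.tail_cons]
        rw [h10, h20, h21, h00, h11, h22]
        simp [Complex.add_re, Complex.mul_re, Complex.normSq_apply]
        ring
      rw [heq] at h0re
      nlinarith [h0re, ha]
    have hP13 : 0 < (A 0 0).re * (A 2 2).re - Complex.normSq (A 0 2) := by
      have hx : (![A 0 2, 0, -(A 0 0)] : Fin 3 → ℂ) ≠ 0 := by
        intro hc
        have := congrFun hc 2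
        simp at this
        exact ha0 this
      have h0 := h.dotProduct_mulVec_pos hx
      have h0re := (Complex.pos_iff.mp h0).1
      have heq : (dotProduct (star (![A 0 2, 0, -(A 0 0)])) (A.mulVec ![A 0 2, 0, -(A 0 0)])).re
          = (A 0 0).re * ((A 0 0).re * (A 2 2).re - Complex.normSq (A 0 2)) := by
        simp only [dotProduct, Matrix.mulVec, Fin.sum_univ_three, Pi.star_apply,
          Matrix.cons_val_zero, Matrix.cons_val_one, Matrix.head_cons,
          Matrix.cons_val_two, Matrix.tail_cons]
        rw [h10, h20, h21, h00, h11, h22]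
        simp [Complex.add_re, Complex.mul_re, Complex.normSq_apply]
        ring
      rw [heq] at h0re
      nlinarith [h0re, ha]
    exact ⟨⟨ha, by linarith⟩, hdetre⟩
  · rintro ⟨⟨ha, hs⟩, hdet⟩
    refine Matrix.PosDef.of_dotProduct_mulVec_pos hA fun x hx => ?_
    rw [Complex.pos_iff]
    have hdet' : A.det.re = (A 0 0).re*(A 1 1).re*(A 2 2).re - (A 0 0).re*((A 1 2).re^2+(A 1 2).im^2)
        - (A 1 1).re*((A 0 2).re^2+(A 0 2).im^2) - (A 2 2).re*((A 0 1).re^2+(A 0 1).im^2)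
        + 2*(((A 0 1).re*(A 1 2).re-(A 0 1).im*(A 1 2).im)*(A 0 2).re
          + ((A 0 1).re*(A 1 2).im+(A 0 1).im*(A 1 2).re)*(A 0 2).im) := by
      rw [Matrix.det_fin_three, h10, h20, h21, h00, h11, h22]
      simp [Complex.add_re, Complex.mul_re, Complex.sub_re]
      ring
    rw [hdet'] at hdet
    have hs' : 0 < ((A 0 0).re*(A 1 1).re - ((A 0 1).re*(A 0 1).re+(A 0 1).im*(A 0 1).im))
        + ((A 0 0).re*(A 2 2).re - ((A 0 2).re*(A 0 2).re+(A 0 2).im*(A 0 2).im)) := by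
      rwa [Complex.normSq_apply, Complex.normSq_apply] at hs
    have hx' : 0 < (x 0).re^2+(x 0).im^2+(x 1).re^2+(x 1).im^2+(x 2).re^2+(x 2).im^2 := by
      obtain ⟨i, hi⟩ := Function.ne_iff.mp hx
      have hi' : x i ≠ 0 := by simpa using hi
      have h2 : (x i).re ≠ 0 ∨ (x i).im ≠ 0 := by
        by_contra hc
        push_neg at hc
        exact hi' (Complex.ext hc.1 hc.2)
      have h3 : 0 < (x i).re^2 + (x i).im^2 := by
        rcases h2 with h | h
        · have := pow_two_pos_of_ne_zero h
          nlinarith [sq_nonneg (x i).im]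
        · have := pow_two_pos_of_ne_zero h
          nlinarith [sq_nonneg (x i).re]
      fin_cases i
      · have h3' : 0 < (x 0).re^2 + (x 0).im^2 := h3
        nlinarith [h3', sq_nonneg (x 1).re, sq_nonneg (x 1).im, sq_nonneg (x 2).re, sq_nonneg (x 2).im]
      · have h3' : 0 < (x 1).re^2 + (x 1).im^2 := h3
        nlinarith [h3', sq_nonneg (x 0).re, sq_nonneg (x 0).im, sq_nonneg (x 2).re, sq_nonneg (x 2).im]
      · have h3' : 0 < (x 2).re^2 + (x 2).im^2 := h3
        nlinarith [h3', sq_nonneg (x 0).re, sq_nonneg (x 0).im, sq_nonneg (x 1).re, sq_nonneg (x 1).im]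
    have key := quad_pos (A 0 0).re (A 1 1).re (A 2 2).re (A 0 1).re (A 0 1).im
      (A 0 2).re (A 0 2).im (A 1 2).re (A 1 2).im
      (x 0).re (x 0).im (x 1).re (x 1).im (x 2).re (x 2).im ha hs' hdet hx'
    constructor
    · have hQ : (dotProduct (star x) (A.mulVec x)).re = (A 0 0).re*((x 0).re^2+(x 0).im^2)
          + (A 1 1).re*((x 1).re^2+(x 1).im^2) + (A 2 2).re*((x 2).re^2+(x 2).im^2)
          + 2*((A 0 1).re*((x 0).re*(x 1).re+(x 0).im*(x 1).im)
            - (A 0 1).im*((x 0).re*(x 1).im-(x 0).im*(x 1).re))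
          + 2*((A 0 2).re*((x 0).re*(x 2).re+(x 0).im*(x 2).im)
            - (A 0 2).im*((x 0).re*(x 2).im-(x 0).im*(x 2).re))
          + 2*((A 1 2).re*((x 1).re*(x 2).re+(x 1).im*(x 2).im)
            - (A 1 2).im*((x 1).re*(x 2).im-(x 1).im*(x 2).re)) := by
        simp only [dotProduct, Matrix.mulVec, Fin.sum_univ_three, Pi.star_apply]
        rw [h10, h20, h21, h00, h11, h22]
        simp [Complex.add_re, Complex.mul_re]
        ring
      rw [hQ]
      linarith [key]
    · simp only [dotProduct, Matrix.mulVec, Fin.sum_univ_three, Pi.star_apply]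
      rw [h10, h20, h21, h00, h11, h22]
      simp [Complex.add_im, Complex.mul_im]
      ring
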